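/- Let E be a locally complete, locally convex Hausdorff space, B a closed bounded disk, J = [0,T], and f : J → E_B continuous for ‖·‖_B with values in H₀·B for some H₀ > 0. Then the function x(t) = x₀ + ∫₀ᵗ f(s) ds (Bochner integral in (E_B, ‖·‖_B)) is differentiable in E with derivative f(t), where differentiability is with respect to the topology of E. -/

import Mathlib

open MeasureTheory intervalIntegral Pointwise Filter Topology

/-- A linear map `φ : X → E` which is a gauge-isometry onto a von Neumann bounded set's
gauge norm is continuous into `E`. -/
theorem aux_phi_continuous {E : Type*} [AddCommGroup E] [Module ℝ E] [TopologicalSpace E]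
    [IsTopologicalAddGroup E] [ContinuousSMul ℝ E]
    (B : Set E) (hbd : Bornology.IsVonNBounded ℝ B)
    {X : Type*} [NormedAddCommGroup X] [NormedSpace ℝ X]
    (φ : X →ₗ[ℝ] E) (hiso : ∀ u : X, ‖u‖ = gauge B (φ u)) :
    Continuous φ := by
  apply continuous_of_continuousAt_zero φ.toAddMonoidHom
  intro V hV
  rw [φ.toAddMonoidHom_coe, map_zero] at hV
  obtain ⟨r, hr⟩ := absorbs_iff_norm.1 (hbd hV)
  set R : ℝ := max r 1 with hR
  have hRpos : 0 < R := lt_of_lt_of_le one_pos (le_max_right r 1)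
  rw [Filter.mem_map, Metric.mem_nhds_iff]
  refine ⟨R⁻¹, by positivity, fun u hu => ?_⟩
  simp only [Metric.mem_ball, dist_zero_right] at hu
  rcases eq_or_ne u 0 with rfl | hu0
  · simpa using mem_of_mem_nhds hV
  · have hnorm : 0 < ‖u‖ := norm_pos_iff.2 hu0
    have hne : { s : ℝ | 0 < s ∧ φ u ∈ s • B }.Nonempty := by
      by_contra hcon
      rw [Set.not_nonempty_iff_eq_empty] at hcon
      have : gauge B (φ u) = 0 := by rw [gauge, hcon, Real.sInf_empty]
      rw [← hiso] at this
      exact hnorm.ne' this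
    have hlt : sInf { s : ℝ | 0 < s ∧ φ u ∈ s • B } < R⁻¹ := by
      rw [← gauge, ← hiso]; exact hu
    obtain ⟨s, ⟨hs0, hsmem⟩, hsR⟩ := (csInf_lt_iff ⟨0, fun x hx => hx.1.le⟩ hne).1 hlt
    have hBsub : B ⊆ s⁻¹ • V := by
      apply hr
      rw [Real.norm_eq_abs, abs_inv, abs_of_pos hs0]
      calc r ≤ R := le_max_left r 1
      _ ≤ s⁻¹ := by
          rw [le_inv_comm₀ hRpos hs0]
          exact hsR.le
    have : s • B ⊆ V := by
      calc s • B ⊆ s • s⁻¹ • V := Set.smul_set_mono hBsub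
      _ = V := by rw [smul_smul, mul_inv_cancel₀ hs0.ne', one_smul]
    exact this hsmem

/-- Let `E` be a locally complete real locally convex Hausdorff space and `B` a closed
bounded disk; local completeness at `B` is encoded by a real Banach space `X` together
with a linear map `φ : X → E` which is an isometry of `X` onto the span of `B` equipped
with the gauge norm `‖·‖_B`.  If `f : [0,T] → E_B` is `‖·‖_B`-continuous with values in
`H₀ • B`, then `x(t) = x₀ + ∫_0^t f(s) ds` (Bochner integral in `(E_B,‖·‖_B)`) is
differentiable in the topology of `E` with derivative `f(t)`. -/
theorem integral_differentiable_in_E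
    {E : Type*} [AddCommGroup E] [Module ℝ E] [TopologicalSpace E]
    [IsTopologicalAddGroup E] [ContinuousSMul ℝ E] [LocallyConvexSpace ℝ E] [T2Space E]
    (B : Set E) (hclosed : IsClosed B) (hconv : Convex ℝ B) (hbal : Balanced ℝ B)
    (hbd : Bornology.IsVonNBounded ℝ B)
    {X : Type*} [NormedAddCommGroup X] [NormedSpace ℝ X] [CompleteSpace X]
    (φ : X →ₗ[ℝ] E) (hiso : ∀ u : X, ‖u‖ = gauge B (φ u))
    (hrange : Set.range φ = (Submodule.span ℝ B : Set E))
    (T : ℝ) (hT : 0 < T) (H₀ : ℝ) (hH₀ : 0 < H₀) (x₀ : X)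
    (f : ℝ → X) (hf : ContinuousOn f (Set.Icc 0 T))
    (hfB : ∀ t ∈ Set.Icc 0 T, φ (f t) ∈ H₀ • B) :
    ∀ t ∈ Set.Ioo 0 T,
      Filter.Tendsto
        (fun h : ℝ =>
          h⁻¹ • (φ (x₀ + ∫ s in (0:ℝ)..(t + h), f s) - φ (x₀ + ∫ s in (0:ℝ)..t, f s)))
        (nhdsWithin 0 {(0:ℝ)}ᶜ) (nhds (φ (f t))) := by
  intro t ht
  have htIcc : t ∈ Set.Icc 0 T := ⟨ht.1.le, ht.2.le⟩
  have hnhds : Set.Icc (0:ℝ) T ∈ nhds t := Icc_mem_nhds ht.1 ht.2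
  have hct : ContinuousAt f t := (hf t htIcc).continuousAt hnhds
  have hint : IntervalIntegrable f volume 0 t := by
    apply ContinuousOn.intervalIntegrable
    apply hf.mono
    rw [Set.uIcc_of_le ht.1.le]
    exact Set.Icc_subset_Icc le_rfl ht.2.le
  have hmeas : StronglyMeasurableAtFilter f (nhds t) volume :=
    ⟨Set.Icc 0 T, hnhds, hf.aestronglyMeasurable measurableSet_Icc⟩
  have hderiv : HasDerivAt (fun u => ∫ s in (0:ℝ)..u, f s) (f t) t :=
    integral_hasDerivAt_right hint hmeas hct
  have hX := hasDerivAt_iff_tendsto_slope_zero.1 hderiv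
  have hφcont : Continuous φ := aux_phi_continuous B hbd φ hiso
  simp only [map_add, add_sub_add_left_eq_sub, ← map_sub, ← _root_.map_smul]
  exact (hφcont.tendsto (f t)).comp hX
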